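/- Suppose there exists a 4-GDD whose group sizes are g_1, g_2, …, g_m (all positive), and let v = g_1 + g_2 + ⋯ + g_m be the total number of points. Then 3g_i + g_j ≤ v for all i, j ∈ {1, 2, …, m} with i ≠ j. -/

import Mathlib

/-- `GDDExists k T` asserts the existence of a group divisible design with
block size `k` whose multiset of group sizes is `T`: there is a finite point
set, a partition of it into nonempty groups whose sizes form the multiset `T`,
and a collection of blocks, each of size `k`, such that no block meets any
group in more than one point, and any two points from distinct groups appear
together in exactly one block. -/
def GDDExists (k : ℕ) (T : Multiset ℕ) : Prop :=
  ∃ (v : ℕ) (G : Finset (Finset (Fin v))) (B : Finset (Finset (Fin v))),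
    (∀ g ∈ G, g.Nonempty) ∧
    (∀ x : Fin v, ∃! g : Finset (Fin v), g ∈ G ∧ x ∈ g) ∧
    G.val.map Finset.card = T ∧
    (∀ b ∈ B, b.card = k) ∧
    (∀ b ∈ B, ∀ g ∈ G, (b ∩ g).card ≤ 1) ∧
    (∀ x y : Fin v, (∀ g ∈ G, ¬ (x ∈ g ∧ y ∈ g)) →
      ∃! b : Finset (Fin v), b ∈ B ∧ x ∈ b ∧ y ∈ b)

theorem group_size_bound (m : ℕ) (g : Fin m → ℕ) (hg : ∀ i, 0 < g i)
    (hgdd : GDDExists 4 (Multiset.map g Finset.univ.val)) :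
    ∀ i j, i ≠ j → 3 * g i + g j ≤ ∑ l, g l := by
  obtain ⟨v, G, B, hne, huniq, hsizes, hb4, hbg, hpair⟩ := hgdd
  classical
  -- groups are pairwise disjoint
  have hdisj : ∀ a ∈ G, ∀ b ∈ G, a ≠ b → Disjoint a b := by
    intro a ha b hb hab
    rw [Finset.disjoint_left]
    intro x hxa hxb
    obtain ⟨gx, -, hgxu⟩ := huniq x
    exact hab ((hgxu a ⟨ha, hxa⟩).trans (hgxu b ⟨hb, hxb⟩).symm)
  -- sum of group sizes is v
  have hunion : G.biUnion (fun x => x) = Finset.univ := by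
    ext x
    simp only [Finset.mem_biUnion, Finset.mem_univ, iff_true]
    obtain ⟨gx, ⟨hgx, hxgx⟩, -⟩ := huniq x
    exact ⟨gx, hgx, hxgx⟩
  have hsum : ∑ l, g l = v := by
    have h1 : (G.biUnion (fun x => x)).card = v := by rw [hunion]; simp
    rw [Finset.card_biUnion hdisj] at h1
    have h2 : ∑ u ∈ G, u.card = (G.val.map Finset.card).sum := rfl
    have h3 : (Multiset.map g Finset.univ.val).sum = ∑ l, g l := rfl
    rw [h2, hsizes, h3] at h1
    exact h1
  intro i j hij
  -- extract two distinct groups of sizes g i, g j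
  have hrel : Multiset.Rel (fun a b => a.card = g b) G.val Finset.univ.val :=
    Multiset.rel_map.mp (Multiset.rel_eq.mpr hsizes)
  have hiu : i ∈ Finset.univ.val := Finset.mem_univ i
  have hju : j ∈ (Finset.univ.val.erase i) :=
    Multiset.mem_erase_of_ne hij.symm |>.mpr (Finset.mem_univ j)
  rw [← Multiset.cons_erase hiu, Multiset.rel_cons_right] at hrel
  obtain ⟨Gi, s1, hGicard, hrel1, hs1⟩ := hrel
  rw [← Multiset.cons_erase hju, Multiset.rel_cons_right] at hrel1
  obtain ⟨Gj, s2, hGjcard, -, hs2⟩ := hrel1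
  have hGval : G.val = Gi ::ₘ Gj ::ₘ s2 := by rw [hs1, hs2]
  have hGi : Gi ∈ G := by rw [← Finset.mem_val, hGval]; simp
  have hGj : Gj ∈ G := by rw [← Finset.mem_val, hGval]; simp
  have hGiGj : Gi ≠ Gj := by
    have hnd : (Gi ::ₘ Gj ::ₘ s2).Nodup := hGval ▸ G.nodup
    intro h
    rw [h] at hnd
    exact (Multiset.nodup_cons.mp hnd).1 (Multiset.mem_cons_self _ _)
  -- pick y in Gj
  have hGjne : Gj.Nonempty := Finset.card_pos.mp (hGjcard ▸ hg j)
  obtain ⟨y, hy⟩ := hGjne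
  -- y's unique group is Gj
  obtain ⟨gy, hgy, hgyu⟩ := huniq y
  have hgyGj : gy = Gj := (hgyu Gj ⟨hGj, hy⟩).symm
  -- key: any z in a block with y, z ≠ y in any common group situation
  have hcond : ∀ x : Fin v, x ∉ Gj → (∀ g' ∈ G, ¬ (x ∈ g' ∧ y ∈ g')) := by
    intro x hx g' hg' ⟨hxg', hyg'⟩
    have : g' = Gj := by rw [← hgyGj]; exact (hgyu g' ⟨hg', hyg'⟩)
    exact hx (this ▸ hxg')
  have hGinotGj : ∀ x ∈ Gi, x ∉ Gj := fun x hx =>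
    Finset.disjoint_left.mp (hdisj Gi hGi Gj hGj hGiGj) hx
  set By := B.filter (fun b => y ∈ b) with hBy
  -- Step A: g i ≤ By.card
  have hA : g i ≤ By.card := by
    rw [← hGicard]
    apply Finset.card_le_card_of_injOn
      (fun x => if hx : x ∈ Gi then
        (hpair x y (hcond x (hGinotGj x hx))).exists.choose else ∅)
    · intro x hx
      simp only [Finset.mem_coe.mp hx, dif_pos]
      have hspec := (hpair x y (hcond x (hGinotGj x hx))).exists.choose_spec
      exact Finset.mem_filter.mpr ⟨hspec.1, hspec.2.2⟩
    · intro x1 hx1 x2 hx2 hfe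
      simp only [Finset.mem_coe] at hx1 hx2
      simp only [hx1, hx2, dif_pos] at hfe
      have h1 := (hpair x1 y (hcond x1 (hGinotGj x1 hx1))).exists.choose_spec
      have h2 := (hpair x2 y (hcond x2 (hGinotGj x2 hx2))).exists.choose_spec
      by_contra hne12
      set b := (hpair x1 y (hcond x1 (hGinotGj x1 hx1))).exists.choose
      have hsub : ({x1, x2} : Finset (Fin v)) ⊆ b ∩ Gi := by
        intro z hz
        rcases Finset.mem_insert.mp hz with h | h
        · subst h; exact Finset.mem_inter.mpr ⟨h1.2.1, hx1⟩
        · rw [Finset.mem_singleton.mp h]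
          exact Finset.mem_inter.mpr ⟨hfe ▸ h2.2.1, hx2⟩
      have := (Finset.card_le_card hsub).trans (hbg b h1.1 Gi hGi)
      rw [Finset.card_pair hne12] at this
      omega
  -- Step B: 3 * By.card ≤ v - g j
  -- blocks through y: erased sets are pairwise disjoint, each of size 3, avoid Gj
  have hyavoid : ∀ b ∈ By, ∀ z ∈ b.erase y, z ∉ Gj := by
    intro b hb z hz hzGj
    obtain ⟨hzney, hzb⟩ := Finset.mem_erase.mp hz
    have hbB := (Finset.mem_filter.mp hb).1
    have hyb := (Finset.mem_filter.mp hb).2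
    have hsub : ({z, y} : Finset (Fin v)) ⊆ b ∩ Gj := by
      intro w hw
      rcases Finset.mem_insert.mp hw with h | h
      · subst h; exact Finset.mem_inter.mpr ⟨hzb, hzGj⟩
      · rw [Finset.mem_singleton.mp h]; exact Finset.mem_inter.mpr ⟨hyb, hy⟩
    have := (Finset.card_le_card hsub).trans (hbg b hbB Gj hGj)
    rw [Finset.card_pair hzney] at this
    omega
  have hdisjB : ∀ b1 ∈ By, ∀ b2 ∈ By, b1 ≠ b2 → Disjoint (b1.erase y) (b2.erase y) := by
    intro b1 hb1 b2 hb2 hne12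
    rw [Finset.disjoint_left]
    intro z hz1 hz2
    have hz1' := Finset.mem_erase.mp hz1
    have hz2' := Finset.mem_erase.mp hz2
    have hzGj : z ∉ Gj := hyavoid b1 hb1 z hz1
    obtain ⟨bu, -, hbu⟩ := hpair z y (hcond z hzGj)
    have e1 : b1 = bu := hbu b1 ⟨(Finset.mem_filter.mp hb1).1, hz1'.2, (Finset.mem_filter.mp hb1).2⟩
    have e2 : b2 = bu := hbu b2 ⟨(Finset.mem_filter.mp hb2).1, hz2'.2, (Finset.mem_filter.mp hb2).2⟩
    exact hne12 (e1.trans e2.symm)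
  have hScard : (By.biUnion (fun b => b.erase y)).card = 3 * By.card := by
    rw [Finset.card_biUnion hdisjB]
    have : ∀ b ∈ By, (b.erase y).card = 3 := by
      intro b hb
      have hbB := (Finset.mem_filter.mp hb).1
      rw [Finset.card_erase_of_mem (Finset.mem_filter.mp hb).2, hb4 b hbB]
    rw [Finset.sum_congr rfl this]
    simp [mul_comm]
  have hSsub : (By.biUnion (fun b => b.erase y)) ⊆ Finset.univ \ Gj := by
    intro z hz
    obtain ⟨b, hb, hzb⟩ := Finset.mem_biUnion.mp hz
    exact Finset.mem_sdiff.mpr ⟨Finset.mem_univ z, hyavoid b hb z hzb⟩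
  have hB : 3 * By.card ≤ v - g j := by
    have := Finset.card_le_card hSsub
    rw [hScard, Finset.card_sdiff_of_subset (Finset.subset_univ Gj)] at this
    simpa [hGjcard] using this
  have hgjv : g j ≤ v := by
    rw [← hGjcard]
    simpa using Finset.card_le_card (Finset.subset_univ Gj)
  omega
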